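/- arXiv:2602.03258 — 3 statements merged into one kernel-verified Lean document; each statement's English description precedes it below -/
import Mathlib

section
/- Let n and B be positive integers, let x_1,…,x_n ∈ ℝ with empirical CDF F(t) = (1/n)·#{i : x_i ≤ t}, and let F̃ : ℝ → ℝ satisfy |F̃(t) − F(t)| ≤ 1/B for all t ∈ ℝ. Suppose T ⊆ ℝ is a set of candidate thresholds such that for every b ∈ {0,1,…,B} there exists t ∈ T with F̃(t) = b/B. Then for every t_cent ∈ ℝ there exists t_fed ∈ T such that (1/n)·#{i : 𝟙(x_i ≤ t_cent) ≠ 𝟙(x_i ≤ t_fed)} ≤ 3/(2B). -/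
lemma key_card (n : ℕ) (x : Fin n → ℝ) (s t : ℝ) (hst : s ≤ t) :
    ((Finset.univ.filter (fun i =>
        (if x i ≤ s then (1 : ℕ) else 0) ≠ (if x i ≤ t then (1 : ℕ) else 0))).card : ℝ)
      = ((Finset.univ.filter (fun i => x i ≤ t)).card : ℝ)
        - ((Finset.univ.filter (fun i => x i ≤ s)).card : ℝ) := by
  have hset : (Finset.univ.filter (fun i =>
        (if x i ≤ s then (1 : ℕ) else 0) ≠ (if x i ≤ t then (1 : ℕ) else 0)))
      = (Finset.univ.filter (fun i => x i ≤ t)) \ (Finset.univ.filter (fun i => x i ≤ s)) := by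
    ext i
    simp only [Finset.mem_filter, Finset.mem_sdiff, Finset.mem_univ, true_and]
    by_cases h1 : x i ≤ s <;> by_cases h2 : x i ≤ t <;>
      simp [h1, h2]
    exact absurd (le_trans h1 hst) h2
  have hsub : (Finset.univ.filter (fun i => x i ≤ s)) ⊆ (Finset.univ.filter (fun i => x i ≤ t)) := by
    intro i hi
    simp only [Finset.mem_filter, Finset.mem_univ, true_and] at *
    exact le_trans hi hst
  rw [hset, Finset.card_sdiff_of_subset hsub]
  have := Finset.card_le_card hsub
  push_cast [Nat.cast_sub this]
  rfl

/-- Corollary 1 (approximation of centralized midpoint splits): if `Ftilde`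
approximates the empirical CDF `F` uniformly within `1/B` and the candidate
set `T` realizes all values `b/B` of `Ftilde`, then for every centralized
threshold there is a federated candidate whose induced left-child assignment
disagrees on at most a `3/(2B)` fraction of the samples. -/
theorem stmt_3 (n B : ℕ) (hn : 0 < n) (hB : 0 < B) (x : Fin n → ℝ)
    (F : ℝ → ℝ)
    (hF : ∀ t, F t = ((Finset.univ.filter (fun i => x i ≤ t)).card : ℝ) / n)
    (Ftilde : ℝ → ℝ) (hclose : ∀ t, |Ftilde t - F t| ≤ 1 / B)
    (T : Set ℝ) (hT : ∀ b : ℕ, b ≤ B → ∃ t ∈ T, Ftilde t = (b : ℝ) / B) :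
    ∀ tcent : ℝ, ∃ tfed ∈ T,
      ((Finset.univ.filter (fun i =>
          (if x i ≤ tcent then (1 : ℕ) else 0) ≠ (if x i ≤ tfed then (1 : ℕ) else 0))).card : ℝ)
        / n ≤ 3 / (2 * B) := by
  intro tcent
  have hnpos : (0 : ℝ) < n := by positivity
  have hBpos : (0 : ℝ) < B := by positivity
  -- F tcent ∈ [0,1]
  have hF0 : 0 ≤ F tcent := by
    rw [hF]; positivity
  have hF1 : F tcent ≤ 1 := by
    rw [hF]
    rw [div_le_one hnpos]
    have := Finset.card_le_card (Finset.filter_subset (fun i => x i ≤ tcent) Finset.univ)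
    simpa using (Nat.cast_le.mpr this : ((Finset.univ.filter (fun i => x i ≤ tcent)).card : ℝ) ≤ (Finset.univ.card : ℝ))
  set r : ℝ := (B : ℝ) * F tcent with hr
  have hr0 : 0 ≤ r := by positivity
  have hrB : r ≤ B := by
    calc r ≤ (B:ℝ) * 1 := by exact mul_le_mul_of_nonneg_left hF1 (le_of_lt hBpos)
    _ = B := mul_one _
  set b : ℤ := ⌊r + 1/2⌋ with hb
  have hb0 : 0 ≤ b := Int.le_floor.mpr (by linarith)
  have hbB : b ≤ B := by
    have : (b : ℝ) ≤ r + 1/2 := Int.floor_le _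
    exact_mod_cast Int.le_of_lt_add_one (by exact_mod_cast (lt_of_le_of_lt this (by linarith : r + 1/2 < (B:ℝ) + 1)))
  have habs : |(b : ℝ) - r| ≤ 1/2 := by
    have h1 : (b : ℝ) ≤ r + 1/2 := Int.floor_le _
    have h2 : r + 1/2 < (b : ℝ) + 1 := Int.lt_floor_add_one _
    rw [abs_le]; constructor <;> linarith
  obtain ⟨tfed, htT, htF⟩ := hT b.toNat (by omega)
  have hbcast : ((b.toNat : ℕ) : ℝ) = (b : ℝ) := by
    exact_mod_cast Int.toNat_of_nonneg hb0
  rw [hbcast] at htF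
  refine ⟨tfed, htT, ?_⟩
  -- |F tfed - F tcent| ≤ 3/(2B)
  have hmain : |F tfed - F tcent| ≤ 3 / (2 * B) := by
    have h1 : |Ftilde tfed - F tfed| ≤ 1 / B := hclose tfed
    have h2 : |Ftilde tfed - F tcent| ≤ 1 / (2 * B) := by
      rw [htF]
      have : (b : ℝ) / B - F tcent = ((b : ℝ) - r) / B := by
        field_simp [hr]
        rw [hr]
      rw [this, abs_div, abs_of_pos hBpos]
      rw [div_le_div_iff₀ hBpos (by positivity)]
      calc |(b:ℝ) - r| * (2 * B) ≤ (1/2) * (2 * B) := by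
            exact mul_le_mul_of_nonneg_right habs (by positivity)
        _ = 1 * B := by ring
    calc |F tfed - F tcent| ≤ |Ftilde tfed - F tfed| + |Ftilde tfed - F tcent| := by
          have := abs_sub (Ftilde tfed - F tfed) (Ftilde tfed - F tcent)
          calc |F tfed - F tcent| = |(Ftilde tfed - F tcent) - (Ftilde tfed - F tfed)| := by ring_nf
            _ ≤ |Ftilde tfed - F tcent| + |Ftilde tfed - F tfed| := abs_sub _ _
            _ = _ := by ring
      _ ≤ 1 / B + 1 / (2 * B) := add_le_add h1 h2
      _ = 3 / (2 * B) := by field_simp; ring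
  rcases le_total tcent tfed with hle | hle
  · have hc := key_card n x tcent tfed hle
    rw [hc]
    have : ((Finset.univ.filter (fun i => x i ≤ tfed)).card : ℝ)
        - ((Finset.univ.filter (fun i => x i ≤ tcent)).card : ℝ) = (F tfed - F tcent) * n := by
      rw [hF, hF]; field_simp
    rw [this]
    rw [mul_div_assoc, div_self (ne_of_gt hnpos), mul_one]
    calc F tfed - F tcent ≤ |F tfed - F tcent| := le_abs_self _
      _ ≤ _ := hmain
  · have hswap : (Finset.univ.filter (fun i =>
        (if x i ≤ tcent then (1 : ℕ) else 0) ≠ (if x i ≤ tfed then (1 : ℕ) else 0)))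
      = (Finset.univ.filter (fun i =>
        (if x i ≤ tfed then (1 : ℕ) else 0) ≠ (if x i ≤ tcent then (1 : ℕ) else 0))) := by
      ext i; simp [ne_comm]
    rw [hswap]
    have hc := key_card n x tfed tcent hle
    rw [hc]
    have : ((Finset.univ.filter (fun i => x i ≤ tcent)).card : ℝ)
        - ((Finset.univ.filter (fun i => x i ≤ tfed)).card : ℝ) = (F tcent - F tfed) * n := by
      rw [hF, hF]; field_simp
    rw [this]
    rw [mul_div_assoc, div_self (ne_of_gt hnpos), mul_one]
    calc F tcent - F tfed ≤ |F tfed - F tcent| := by rw [abs_sub_comm]; exact le_abs_self _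
      _ ≤ _ := hmain
end

section
/- Let K be a positive integer. For each client k ∈ {1,…,K}, let client k's node sample consist of pairs (x_{k,i}, y_{k,i}) ∈ ℝ × ℝ for i = 1,…,n_k, and fix a threshold t ∈ ℝ splitting each client's sample into left part L_k = {i : x_{k,i} ≤ t} and right part R_k = {i : x_{k,i} > t}; assume L_k and R_k are nonempty for every k. For any finite nonempty multiset of reals, write Var for its empirical variance. Let ΔI_k = Var(y_k) − (|L_k|/n_k)·Var(y_k restricted to L_k) − (|R_k|/n_k)·Var(y_k restricted to R_k) be client k's local impurity reduction, and let ΔI be the analogous impurity reduction computed on the pooled sample (the disjoint union over clients), with pooled node size n = ∑_k n_k, pooled left size n_L = ∑_k |L_k| and right size n_R = ∑_k |R_k|. For each part m ∈ {node, left, right}, let E(m) = ∑_k (n_{m,k}/n_m)·(ȳ_{m,k} − ȳ_m)², where ȳ_{m,k} is client k's empirical mean of y over part m and ȳ_m is the pooled empirical mean over part m. Then ΔI = ∑_{k=1}^K (n_k/n)·ΔI_k + E(node) − (n_L/n)·E(left) − (n_R/n)·E(right). -/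

lemma sq_dev_decomp {ι : Type*} (S : Finset ι) (f : ι → ℝ) (M m : ℝ)
    (hS : S.Nonempty) (hm : m = (∑ j ∈ S, f j) / S.card) :
    ∑ i ∈ S, (f i - M) ^ 2
      = (∑ i ∈ S, (f i - m) ^ 2) + (S.card : ℝ) * (m - M) ^ 2 := by
  have hc : (S.card : ℝ) ≠ 0 := by
    exact_mod_cast (Finset.card_pos.mpr hS).ne'
  have hsum : ∑ i ∈ S, (f i - m) = 0 := by
    rw [Finset.sum_sub_distrib, Finset.sum_const, nsmul_eq_mul, hm]
    field_simp
    ring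
  have expand : ∀ i ∈ S, (f i - M) ^ 2
      = (f i - m) ^ 2 + 2 * (m - M) * (f i - m) + (m - M) ^ 2 := by
    intro i _; ring
  rw [Finset.sum_congr rfl expand, Finset.sum_add_distrib, Finset.sum_add_distrib,
    ← Finset.mul_sum, hsum, Finset.sum_const, nsmul_eq_mul]
  ring

/-- Exact decomposition of the pooled variance impurity reduction (core of
Theorem 3): the centralized gain equals the size-weighted average of the
clients' local gains (the AvgImp estimator) plus the heterogeneity terms of
the node, left and right parts. -/
theorem stmt_10 (K : ℕ) (hK : 0 < K) (n : Fin K → ℕ) (hn : ∀ k, 0 < n k)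
    (x y : (k : Fin K) → Fin (n k) → ℝ) (t : ℝ)
    -- left and right parts of each client's sample
    (Lset Rset : (k : Fin K) → Finset (Fin (n k)))
    (hLset : ∀ k, Lset k = Finset.univ.filter (fun i => x k i ≤ t))
    (hRset : ∀ k, Rset k = Finset.univ.filter (fun i => ¬ x k i ≤ t))
    (hLne : ∀ k, (Lset k).Nonempty) (hRne : ∀ k, (Rset k).Nonempty)
    -- pooled sizes
    (Nr nL nR : ℝ)
    (hNr : Nr = ∑ k, (n k : ℝ))
    (hnL : nL = ∑ k, ((Lset k).card : ℝ))
    (hnR : nR = ∑ k, ((Rset k).card : ℝ))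
    -- local empirical means over the node, left and right parts
    (ybar ybarL ybarR : Fin K → ℝ)
    (hybar : ∀ k, ybar k = (∑ i, y k i) / n k)
    (hybarL : ∀ k, ybarL k = (∑ i ∈ Lset k, y k i) / (Lset k).card)
    (hybarR : ∀ k, ybarR k = (∑ i ∈ Rset k, y k i) / (Rset k).card)
    -- local empirical variances over the node, left and right parts
    (Vk VLk VRk : Fin K → ℝ)
    (hVk : ∀ k, Vk k = (∑ i, (y k i - ybar k) ^ 2) / n k)
    (hVLk : ∀ k, VLk k = (∑ i ∈ Lset k, (y k i - ybarL k) ^ 2) / (Lset k).card)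
    (hVRk : ∀ k, VRk k = (∑ i ∈ Rset k, (y k i - ybarR k) ^ 2) / (Rset k).card)
    -- local impurity reductions
    (DIk : Fin K → ℝ)
    (hDIk : ∀ k, DIk k
      = Vk k - (((Lset k).card : ℝ) / n k) * VLk k - (((Rset k).card : ℝ) / n k) * VRk k)
    -- pooled empirical means
    (Ybar YbarL YbarR : ℝ)
    (hYbar : Ybar = (∑ k, ∑ i, y k i) / Nr)
    (hYbarL : YbarL = (∑ k, ∑ i ∈ Lset k, y k i) / nL)
    (hYbarR : YbarR = (∑ k, ∑ i ∈ Rset k, y k i) / nR)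
    -- pooled empirical variances
    (Vpool VLpool VRpool : ℝ)
    (hVpool : Vpool = (∑ k, ∑ i, (y k i - Ybar) ^ 2) / Nr)
    (hVLpool : VLpool = (∑ k, ∑ i ∈ Lset k, (y k i - YbarL) ^ 2) / nL)
    (hVRpool : VRpool = (∑ k, ∑ i ∈ Rset k, (y k i - YbarR) ^ 2) / nR)
    -- pooled impurity reduction
    (DI : ℝ)
    (hDI : DI = Vpool - (nL / Nr) * VLpool - (nR / Nr) * VRpool)
    -- heterogeneity (Jensen-gap) terms
    (Enode EL ER : ℝ)
    (hEnode : Enode = ∑ k, ((n k : ℝ) / Nr) * (ybar k - Ybar) ^ 2)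
    (hEL : EL = ∑ k, (((Lset k).card : ℝ) / nL) * (ybarL k - YbarL) ^ 2)
    (hER : ER = ∑ k, (((Rset k).card : ℝ) / nR) * (ybarR k - YbarR) ^ 2) :
    DI = (∑ k, ((n k : ℝ) / Nr) * DIk k) + Enode - (nL / Nr) * EL - (nR / Nr) * ER := by
  have hNr0 : (0:ℝ) < Nr := by
    rw [hNr]
    apply Finset.sum_pos (fun k _ => by exact_mod_cast hn k)
    exact Finset.univ_nonempty_iff.mpr ⟨⟨0, hK⟩⟩
  have hnL0 : (0:ℝ) < nL := by
    rw [hnL]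
    apply Finset.sum_pos (fun k _ => by exact_mod_cast Finset.card_pos.mpr (hLne k))
    exact Finset.univ_nonempty_iff.mpr ⟨⟨0, hK⟩⟩
  have hnR0 : (0:ℝ) < nR := by
    rw [hnR]
    apply Finset.sum_pos (fun k _ => by exact_mod_cast Finset.card_pos.mpr (hRne k))
    exact Finset.univ_nonempty_iff.mpr ⟨⟨0, hK⟩⟩
  have hnk : ∀ k, ((n k : ℝ)) ≠ 0 := fun k => by exact_mod_cast (hn k).ne'
  have node_k : ∀ k, ∑ i, (y k i - Ybar) ^ 2
      = (n k : ℝ) * Vk k + (n k : ℝ) * (ybar k - Ybar) ^ 2 := by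
    intro k
    have hne : (Finset.univ : Finset (Fin (n k))).Nonempty :=
      Finset.univ_nonempty_iff.mpr ⟨⟨0, hn k⟩⟩
    have hcard : ((Finset.univ : Finset (Fin (n k))).card : ℝ) = (n k : ℝ) := by
      simp
    have := sq_dev_decomp Finset.univ (y k) Ybar (ybar k) hne
      (by rw [hybar k, hcard])
    rw [this, hcard, hVk k]
    rw [mul_div_cancel₀ _ (by exact_mod_cast (hn k).ne' : ((n k:ℝ)) ≠ 0)]
  have left_k : ∀ k, ∑ i ∈ Lset k, (y k i - YbarL) ^ 2
      = ((Lset k).card : ℝ) * VLk k + ((Lset k).card : ℝ) * (ybarL k - YbarL) ^ 2 := by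
    intro k
    have hc : (((Lset k).card : ℝ)) ≠ 0 := by
      exact_mod_cast (Finset.card_pos.mpr (hLne k)).ne'
    have := sq_dev_decomp (Lset k) (y k) YbarL (ybarL k) (hLne k) (hybarL k)
    rw [this, hVLk k]
    rw [mul_div_cancel₀ _ hc]
  have right_k : ∀ k, ∑ i ∈ Rset k, (y k i - YbarR) ^ 2
      = ((Rset k).card : ℝ) * VRk k + ((Rset k).card : ℝ) * (ybarR k - YbarR) ^ 2 := by
    intro k
    have hc : (((Rset k).card : ℝ)) ≠ 0 := by
      exact_mod_cast (Finset.card_pos.mpr (hRne k)).ne'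
    have := sq_dev_decomp (Rset k) (y k) YbarR (ybarR k) (hRne k) (hybarR k)
    rw [this, hVRk k]
    rw [mul_div_cancel₀ _ hc]
  have hVpool' : Vpool = (∑ k, ((n k : ℝ) / Nr) * Vk k) + Enode := by
    rw [hVpool, hEnode]
    simp_rw [node_k]
    rw [Finset.sum_add_distrib, add_div, Finset.sum_div, Finset.sum_div]
    congr 1
    · exact Finset.sum_congr rfl fun k _ => by ring
    · exact Finset.sum_congr rfl fun k _ => by ring
  have hVL' : VLpool = (∑ k, (((Lset k).card : ℝ) / nL) * VLk k) + EL := by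
    rw [hVLpool, hEL]
    simp_rw [left_k]
    rw [Finset.sum_add_distrib, add_div, Finset.sum_div, Finset.sum_div]
    congr 1
    · exact Finset.sum_congr rfl fun k _ => by ring
    · exact Finset.sum_congr rfl fun k _ => by ring
  have hVR' : VRpool = (∑ k, (((Rset k).card : ℝ) / nR) * VRk k) + ER := by
    rw [hVRpool, hER]
    simp_rw [right_k]
    rw [Finset.sum_add_distrib, add_div, Finset.sum_div, Finset.sum_div]
    congr 1
    · exact Finset.sum_congr rfl fun k _ => by ring
    · exact Finset.sum_congr rfl fun k _ => by ring
  have hsplit : ∑ k, ((n k : ℝ) / Nr) * DIk k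
      = (∑ k, ((n k : ℝ) / Nr) * Vk k)
        - (∑ k, (((Lset k).card : ℝ) / Nr) * VLk k)
        - (∑ k, (((Rset k).card : ℝ) / Nr) * VRk k) := by
    rw [← Finset.sum_sub_distrib, ← Finset.sum_sub_distrib]
    refine Finset.sum_congr rfl fun k _ => ?_
    rw [hDIk k]
    field_simp [hnk k]
  have hLmul : (nL / Nr) * (∑ k, (((Lset k).card : ℝ) / nL) * VLk k)
      = ∑ k, (((Lset k).card : ℝ) / Nr) * VLk k := by
    rw [Finset.mul_sum]
    refine Finset.sum_congr rfl fun k _ => ?_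
    field_simp
  have hRmul : (nR / Nr) * (∑ k, (((Rset k).card : ℝ) / nR) * VRk k)
      = ∑ k, (((Rset k).card : ℝ) / Nr) * VRk k := by
    rw [Finset.mul_sum]
    refine Finset.sum_congr rfl fun k _ => ?_
    field_simp
  rw [hDI, hVpool', hVL', hVR', hsplit, mul_add, mul_add, hLmul, hRmul]
  ring
end

section
/- In the setting of the exact decomposition ΔI = ∑_{k=1}^K (n_k/n)·ΔI_k + E(node) − (n_L/n)·E(left) − (n_R/n)·E(right), where each heterogeneity term E(m) = ∑_k (n_{m,k}/n_m)·(ȳ_{m,k} − ȳ_m)² is a size-weighted sum of squared deviations, the AvgImp approximation error satisfies |ΔI − ∑_{k=1}^K (n_k/n)·ΔI_k| ≤ E(node) + (n_L/n)·E(left) + (n_R/n)·E(right). -/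
lemma sum_sq_dev {ι : Type*} (S : Finset ι) (hS : S.Nonempty) (y : ι → ℝ) (M : ℝ) :
    ∑ i ∈ S, (y i - M)^2
      = ∑ i ∈ S, (y i - (∑ j ∈ S, y j)/(S.card : ℝ))^2
        + (S.card : ℝ) * ((∑ j ∈ S, y j)/(S.card : ℝ) - M)^2 := by
  set c : ℝ := (S.card : ℝ) with hc
  set s : ℝ := ∑ j ∈ S, y j with hs
  have hc0 : c ≠ 0 := by
    simp [hc, Finset.card_ne_zero_of_mem hS.choose_spec]
  have key : ∑ i ∈ S, ((y i - M)^2 - (y i - s/c)^2)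
      = (s/c - M) * (2 * s) - c * ((s/c - M) * (M + s/c)) := by
    have : ∀ i ∈ S, (y i - M)^2 - (y i - s/c)^2
        = (s/c - M) * (2 * y i) - (s/c - M) * (M + s/c) := by
      intro i _; ring
    rw [Finset.sum_congr rfl this, Finset.sum_sub_distrib, Finset.sum_const,
      nsmul_eq_mul, ← Finset.mul_sum]
    have h2 : ∑ i ∈ S, 2 * y i = 2 * s := by rw [Finset.mul_sum]
    rw [h2, ← hc]
  have hsum : ∑ i ∈ S, ((y i - M)^2 - (y i - s/c)^2)
      = ∑ i ∈ S, (y i - M)^2 - ∑ i ∈ S, (y i - s/c)^2 := Finset.sum_sub_distrib _ _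
  rw [hsum] at key
  have : (s/c - M) * (2 * s) - c * ((s/c - M) * (M + s/c)) = c * (s/c - M)^2 := by
    field_simp
    ring
  linarith [key, this]

lemma pooled_var (K : ℕ) (n : Fin K → ℕ) (y : (k : Fin K) → Fin (n k) → ℝ)
    (S : (k : Fin K) → Finset (Fin (n k))) (hS : ∀ k, (S k).Nonempty)
    (N : ℝ) (hN0 : N ≠ 0)
    (m v : Fin K → ℝ)
    (hm : ∀ k, m k = (∑ i ∈ S k, y k i) / ((S k).card : ℝ))
    (hv : ∀ k, v k = (∑ i ∈ S k, (y k i - m k)^2) / ((S k).card : ℝ))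
    (M : ℝ) :
    (∑ k, ∑ i ∈ S k, (y k i - M)^2) / N
      = ∑ k, (((S k).card : ℝ)/N) * v k + ∑ k, (((S k).card : ℝ)/N) * (m k - M)^2 := by
  have per : ∀ k ∈ Finset.univ, ∑ i ∈ S k, (y k i - M)^2
      = ((S k).card : ℝ) * v k + ((S k).card : ℝ) * (m k - M)^2 := by
    intro k _
    have hc0 : ((S k).card : ℝ) ≠ 0 := by
      simp [Finset.card_ne_zero_of_mem (hS k).choose_spec]
    have h1 := sum_sq_dev (S k) (hS k) (y k) M
    rw [← hm k] at h1
    have h2 : ∑ i ∈ S k, (y k i - m k)^2 = ((S k).card : ℝ) * v k := by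
      rw [hv k]; field_simp
    rw [h1, h2]
  rw [Finset.sum_congr rfl per, Finset.sum_add_distrib, add_div,
    Finset.sum_div, Finset.sum_div]
  congr 1 <;> exact Finset.sum_congr rfl (fun k _ => by ring)

/-- AvgImp approximation error bound: in the setting of the exact
decomposition ΔI = ∑ₖ (nₖ/n)·ΔIₖ + E(node) − (n_L/n)·E(left) − (n_R/n)·E(right),
the deviation of the AvgImp estimator from the centralized gain is bounded by
E(node) + (n_L/n)·E(left) + (n_R/n)·E(right). -/
theorem stmt_11 (K : ℕ) (hK : 0 < K) (n : Fin K → ℕ) (hn : ∀ k, 0 < n k)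
    (x y : (k : Fin K) → Fin (n k) → ℝ) (t : ℝ)
    -- left and right parts of each client's sample
    (Lset Rset : (k : Fin K) → Finset (Fin (n k)))
    (hLset : ∀ k, Lset k = Finset.univ.filter (fun i => x k i ≤ t))
    (hRset : ∀ k, Rset k = Finset.univ.filter (fun i => ¬ x k i ≤ t))
    (hLne : ∀ k, (Lset k).Nonempty) (hRne : ∀ k, (Rset k).Nonempty)
    -- pooled sizes
    (Nr nL nR : ℝ)
    (hNr : Nr = ∑ k, (n k : ℝ))
    (hnL : nL = ∑ k, ((Lset k).card : ℝ))
    (hnR : nR = ∑ k, ((Rset k).card : ℝ))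
    -- local empirical means over the node, left and right parts
    (ybar ybarL ybarR : Fin K → ℝ)
    (hybar : ∀ k, ybar k = (∑ i, y k i) / n k)
    (hybarL : ∀ k, ybarL k = (∑ i ∈ Lset k, y k i) / (Lset k).card)
    (hybarR : ∀ k, ybarR k = (∑ i ∈ Rset k, y k i) / (Rset k).card)
    -- local empirical variances over the node, left and right parts
    (Vk VLk VRk : Fin K → ℝ)
    (hVk : ∀ k, Vk k = (∑ i, (y k i - ybar k) ^ 2) / n k)
    (hVLk : ∀ k, VLk k = (∑ i ∈ Lset k, (y k i - ybarL k) ^ 2) / (Lset k).card)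
    (hVRk : ∀ k, VRk k = (∑ i ∈ Rset k, (y k i - ybarR k) ^ 2) / (Rset k).card)
    -- local impurity reductions
    (DIk : Fin K → ℝ)
    (hDIk : ∀ k, DIk k
      = Vk k - (((Lset k).card : ℝ) / n k) * VLk k - (((Rset k).card : ℝ) / n k) * VRk k)
    -- pooled empirical means
    (Ybar YbarL YbarR : ℝ)
    (hYbar : Ybar = (∑ k, ∑ i, y k i) / Nr)
    (hYbarL : YbarL = (∑ k, ∑ i ∈ Lset k, y k i) / nL)
    (hYbarR : YbarR = (∑ k, ∑ i ∈ Rset k, y k i) / nR)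
    -- pooled empirical variances
    (Vpool VLpool VRpool : ℝ)
    (hVpool : Vpool = (∑ k, ∑ i, (y k i - Ybar) ^ 2) / Nr)
    (hVLpool : VLpool = (∑ k, ∑ i ∈ Lset k, (y k i - YbarL) ^ 2) / nL)
    (hVRpool : VRpool = (∑ k, ∑ i ∈ Rset k, (y k i - YbarR) ^ 2) / nR)
    -- pooled impurity reduction
    (DI : ℝ)
    (hDI : DI = Vpool - (nL / Nr) * VLpool - (nR / Nr) * VRpool)
    -- heterogeneity (Jensen-gap) terms
    (Enode EL ER : ℝ)
    (hEnode : Enode = ∑ k, ((n k : ℝ) / Nr) * (ybar k - Ybar) ^ 2)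
    (hEL : EL = ∑ k, (((Lset k).card : ℝ) / nL) * (ybarL k - YbarL) ^ 2)
    (hER : ER = ∑ k, (((Rset k).card : ℝ) / nR) * (ybarR k - YbarR) ^ 2) :
    |DI - ∑ k, ((n k : ℝ) / Nr) * DIk k| ≤ Enode + (nL / Nr) * EL + (nR / Nr) * ER := by
  -- positivity of sizes
  have hNr0 : 0 < Nr := by
    rw [hNr]
    apply Finset.sum_pos (fun k _ => by exact_mod_cast hn k)
    exact Finset.univ_nonempty_iff.mpr ⟨⟨0, hK⟩⟩
  have hnL0 : 0 < nL := by
    rw [hnL]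
    apply Finset.sum_pos (fun k _ => by exact_mod_cast Finset.card_pos.mpr (hLne k))
    exact Finset.univ_nonempty_iff.mpr ⟨⟨0, hK⟩⟩
  have hnR0 : 0 < nR := by
    rw [hnR]
    apply Finset.sum_pos (fun k _ => by exact_mod_cast Finset.card_pos.mpr (hRne k))
    exact Finset.univ_nonempty_iff.mpr ⟨⟨0, hK⟩⟩
  -- pooled variance decompositions
  have hnode : Vpool = ∑ k, ((n k : ℝ)/Nr) * Vk k + Enode := by
    have hne : ∀ k : Fin K, (Finset.univ : Finset (Fin (n k))).Nonempty :=
      fun k => Finset.univ_nonempty_iff.mpr ⟨⟨0, hn k⟩⟩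
    have := pooled_var K n y (fun _ => Finset.univ) hne Nr hNr0.ne' ybar Vk
      (fun k => by rw [hybar k]; simp) (fun k => by rw [hVk k]; simp) Ybar
    simp only [Finset.card_univ, Fintype.card_fin] at this
    rw [hVpool, this, hEnode]
  have hLdec : VLpool = ∑ k, (((Lset k).card : ℝ)/nL) * VLk k + EL := by
    have := pooled_var K n y Lset hLne nL hnL0.ne' ybarL VLk hybarL hVLk YbarL
    rw [hVLpool, this, hEL]
  have hRdec : VRpool = ∑ k, (((Rset k).card : ℝ)/nR) * VRk k + ER := by
    have := pooled_var K n y Rset hRne nR hnR0.ne' ybarR VRk hybarR hVRk YbarR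
    rw [hVRpool, this, hER]
  -- split the weighted local gains
  have split : ∀ k ∈ Finset.univ, ((n k:ℝ)/Nr) * DIk k
      = ((n k:ℝ)/Nr) * Vk k - (nL/Nr) * ((((Lset k).card:ℝ)/nL) * VLk k)
        - (nR/Nr) * ((((Rset k).card:ℝ)/nR) * VRk k) := by
    intro k _
    have hnk : ((n k:ℝ)) ≠ 0 := by exact_mod_cast (hn k).ne'
    rw [hDIk k]
    field_simp
  have hsum : ∑ k, ((n k:ℝ)/Nr) * DIk k
      = ∑ k, ((n k:ℝ)/Nr) * Vk k
        - (nL/Nr) * ∑ k, (((Lset k).card:ℝ)/nL) * VLk k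
        - (nR/Nr) * ∑ k, (((Rset k).card:ℝ)/nR) * VRk k := by
    rw [Finset.sum_congr rfl split, Finset.sum_sub_distrib, Finset.sum_sub_distrib,
      ← Finset.mul_sum, ← Finset.mul_sum]
  -- exact decomposition
  have hdec : DI - ∑ k, ((n k:ℝ)/Nr) * DIk k
      = Enode - (nL/Nr) * EL - (nR/Nr) * ER := by
    rw [hsum, hDI]
    have e1 : ∑ k, ((n k:ℝ)/Nr) * Vk k = Vpool - Enode := by linarith
    have e2 : ∑ k, (((Lset k).card:ℝ)/nL) * VLk k = VLpool - EL := by linarith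
    have e3 : ∑ k, (((Rset k).card:ℝ)/nR) * VRk k = VRpool - ER := by linarith
    rw [e1, e2, e3]; ring
  -- nonnegativity of heterogeneity terms
  have hE0 : 0 ≤ Enode := by
    rw [hEnode]
    apply Finset.sum_nonneg
    intro k _
    exact mul_nonneg (div_nonneg (by positivity) hNr0.le) (sq_nonneg _)
  have hEL0 : 0 ≤ EL := by
    rw [hEL]
    apply Finset.sum_nonneg
    intro k _
    exact mul_nonneg (div_nonneg (by positivity) hnL0.le) (sq_nonneg _)
  have hER0 : 0 ≤ ER := by
    rw [hER]
    apply Finset.sum_nonneg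
    intro k _
    exact mul_nonneg (div_nonneg (by positivity) hnR0.le) (sq_nonneg _)
  have ha : 0 ≤ (nL/Nr) * EL := mul_nonneg (div_nonneg hnL0.le hNr0.le) hEL0
  have hb : 0 ≤ (nR/Nr) * ER := mul_nonneg (div_nonneg hnR0.le hNr0.le) hER0
  rw [hdec, abs_le]
  constructor <;> linarith
end
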